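/- With s_n := S_n(X_δ) (normalized Chebyshev of the second kind evaluated at X_δ), for every n ≥ 0: s_n = q^{n/2} X_1 X_{n+3} - q^{n/2+1} X_2 X_{n+2}. -/

import Mathlib

/-- The normalized quantum-torus monomial `X^{(a,b)} = q^{-ab/2} X₁^a X₂^b`,
where `v = q^{1/2}`. -/
def Xmon {F : Type*} [DivisionRing F] (v X1 X2 : F) (a b : ℤ) : F :=
  v ^ (-(a * b)) * X1 ^ a * X2 ^ b

/-- The normalized Chebyshev polynomials of the second kind:
`S 0 = 1`, `S 1 = X`, `S 2 = X^2 - 1`, `S (n+1) = S n * S 1 - S (n-1)` for `n ≥ 2`. -/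
noncomputable def chebS : ℕ → Polynomial ℤ
  | 0 => 1
  | 1 => Polynomial.X
  | 2 => Polynomial.X ^ 2 - 1
  | n + 3 => chebS (n + 2) * Polynomial.X - chebS (n + 1)

section aux
variable {F : Type*} [DivisionRing F]

private lemma mmx {p q r : F} (h : p * q = r) (x : F) : p * (q * x) = r * x := by
  rw [← mul_assoc, h]

private lemma aux_up (w a b c : F) (ha : a ≠ 0) (hw : ∀ x : F, w * x = x * w)
    (h1 : a * b = w * (b * a)) (h2 : a * c = w * b ^ 2 + 1) :
    b * c = w * (c * b) := by
  have W1 : ∀ x y : F, x * (w * y) = w * (x * y) := fun x y => by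
    rw [← mul_assoc, ← hw, mul_assoc]
  apply mul_left_cancel₀ ha
  rw [mmx h1]
  simp only [sq, mul_add, add_mul, mul_sub, sub_mul, mul_one, one_mul,
    mul_assoc, W1]
  rw [mmx h2, h2]
  simp only [sq, mul_add, add_mul, mul_one, one_mul, mul_assoc, W1]

private lemma aux_down (w a b c : F) (hc : c ≠ 0) (hw : ∀ x : F, w * x = x * w)
    (h1 : b * c = w * (c * b)) (h2 : a * c = w * b ^ 2 + 1) :
    a * b = w * (b * a) := by
  have W1 : ∀ x y : F, x * (w * y) = w * (x * y) := fun x y => by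
    rw [← mul_assoc, ← hw, mul_assoc]
  apply mul_right_cancel₀ hc
  simp only [mul_assoc]
  rw [h1]
  simp only [sq, mul_add, add_mul, mul_sub, sub_mul, mul_one, one_mul,
    mul_assoc, W1]
  rw [mmx h2, h2]
  simp only [sq, mul_add, add_mul, mul_one, one_mul, mul_assoc, W1]

private lemma aux_rev (w a b c : F) (ha : a ≠ 0) (hw : ∀ x : F, w * x = x * w)
    (h1 : a * b = w * (b * a)) (h2 : a * c = w * b ^ 2 + 1) :
    w * (c * a) = b ^ 2 + w := by
  have W1 : ∀ x y : F, x * (w * y) = w * (x * y) := fun x y => by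
    rw [← mul_assoc, ← hw, mul_assoc]
  apply mul_left_cancel₀ ha
  simp only [sq, mul_add, add_mul, mul_sub, sub_mul, mul_one, one_mul,
    mul_assoc, W1]
  rw [mmx h2, mmx h1]
  simp only [sq, mul_add, add_mul, mul_one, one_mul, mul_assoc, W1]
  rw [h1, ← hw a]
  simp only [sq, mul_add, add_mul, mul_one, one_mul, mul_assoc, W1]

private lemma aux_L (w a b c e : F) (hw : ∀ x : F, w * x = x * w)
    (hbc : b * c = w * (c * b)) (hbe : b * e = w * c ^ 2 + 1)
    (hca : w * (c * a) = b ^ 2 + w) :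
    w * (c * (a * e - w * (b * c))) = w * e + b := by
  have W1 : ∀ x y : F, x * (w * y) = w * (x * y) := fun x y => by
    rw [← mul_assoc, ← hw, mul_assoc]
  have hca' : ∀ x, w * (c * (a * x)) = (b ^ 2 + w) * x := fun x => by
    rw [← mul_assoc c a, ← mul_assoc, mul_assoc w, mmx hca]
  rw [mul_sub, mul_sub, hca']
  simp only [sq, mul_add, add_mul, mul_sub, sub_mul, mul_one, one_mul,
    mul_assoc, W1]
  rw [hbe]
  simp only [sq, mul_add, add_mul, mul_sub, sub_mul, mul_one, one_mul,
    mul_assoc, W1]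
  rw [mmx hbc]
  simp only [sq, mul_add, add_mul, mul_sub, sub_mul, mul_one, one_mul,
    mul_assoc, W1]
  abel

private lemma aux_L2 (w b c e f : F) (hw : ∀ x : F, w * x = x * w)
    (hbc : b * c = w * (c * b)) (hbe : b * e = w * c ^ 2 + 1)
    (hcf : c * f = w * e ^ 2 + 1) :
    w * (c * (b * f - w * (c * e))) = w * e + b := by
  have W1 : ∀ x y : F, x * (w * y) = w * (x * y) := fun x y => by
    rw [← mul_assoc, ← hw, mul_assoc]
  have hbc' : ∀ x, w * (c * (b * x)) = b * (c * x) := fun x => by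
    rw [← mul_assoc c b, ← mul_assoc, ← hbc, mul_assoc]
  rw [mul_sub, mul_sub, hbc', hcf]
  simp only [sq, mul_add, add_mul, mul_sub, sub_mul, mul_one, one_mul,
    mul_assoc, W1]
  rw [mmx hbe]
  simp only [sq, mul_add, add_mul, mul_sub, sub_mul, mul_one, one_mul,
    mul_assoc, W1]
  abel
end aux

/-- With `s_n := S_n(X_δ)`, for every `n ≥ 0`:
`s_n = q^{n/2} X₁ X_{n+3} - q^{n/2+1} X₂ X_{n+2}`. -/
theorem sn_eq
{F : Type*} [DivisionRing F] (v : F) (hv : v ≠ 0)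
    (hvc : ∀ x : F, v * x = x * v)
    (X : ℤ → F) (hXne : ∀ m : ℤ, X m ≠ 0)
    (h12 : X 1 * X 2 = v ^ 2 * (X 2 * X 1))
    (hrec : ∀ m : ℤ, X (m - 1) * X (m + 1) = v ^ 2 * X m ^ 2 + 1) :
    ∀ n : ℕ,
      Polynomial.aeval (v * (X 0 * X 3 - v ^ 2 * (X 1 * X 2))) (chebS n)
        = v ^ (n : ℤ) * (X 1 * X ((n : ℤ) + 3))
          - v ^ ((n : ℤ) + 2) * (X 2 * X ((n : ℤ) + 2)) := by
  have hw2 : ∀ x : F, v ^ 2 * x = x * v ^ 2 := fun x =>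
    ((show Commute v x from hvc x).pow_left 2)
  have Wv : ∀ x y : F, x * (v * y) = v * (x * y) := fun x y => by
    rw [← mul_assoc, ← hvc, mul_assoc]
  have Wv2 : ∀ x y : F, x * (v ^ 2 * y) = v ^ 2 * (x * y) := fun x y => by
    rw [← mul_assoc, ← hw2, mul_assoc]
  have Z1 : ∀ (k : ℤ) (x : F), v ^ k * (v * x) = v ^ (k + 1) * x := fun k x => by
    rw [← mul_assoc, ← zpow_add_one₀ hv]
  have Z2 : ∀ (k : ℤ) (x : F), v ^ k * (v ^ 2 * x) = v ^ (k + 2) * x := fun k x => by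
    rw [← mul_assoc, show v ^ k * v ^ 2 = v ^ (k + 2) by
      rw [← zpow_natCast v 2, ← zpow_add₀ hv]; norm_num]
  have Z1' : ∀ (k : ℤ) (x : F), v * (v ^ k * x) = v ^ (k + 1) * x := fun k x => by
    rw [← mul_assoc, show v * v ^ k = v ^ (k + 1) by
      rw [← zpow_one_add₀ hv, add_comm]]
  have Z2' : ∀ (k : ℤ) (x : F), v ^ 2 * (v ^ k * x) = v ^ (k + 2) * x := fun k x => by
    rw [← mul_assoc, show v ^ 2 * v ^ k = v ^ (k + 2) by
      rw [← zpow_natCast v 2, ← zpow_add₀ hv]; norm_num; rw [add_comm]]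
  have hz2 : v ^ (2:ℤ) = v ^ (2:ℕ) := by
    rw [show (2:ℤ) = ((2:ℕ):ℤ) by norm_num, zpow_natCast]
  have hz3 : v ^ (3:ℤ) = v ^ (3:ℕ) := by
    rw [show (3:ℤ) = ((3:ℕ):ℤ) by norm_num, zpow_natCast]
  have hrec' : ∀ m : ℤ, X m * X (m + 2) = v ^ 2 * X (m + 1) ^ 2 + 1 := by
    intro m
    have h := hrec (m + 1)
    rw [show m + 1 - 1 = m by ring, show m + 1 + 1 = m + 2 by ring] at h
    exact h
  have hcomm : ∀ m : ℤ, X m * X (m + 1) = v ^ 2 * (X (m + 1) * X m) := by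
    intro m
    induction m using Int.induction_on with
    | zero =>
      have h2 := hrec' 0
      norm_num at h2
      have := aux_down (v ^ 2) (X 0) (X 1) (X 2) (hXne 2) hw2 h12 h2
      simpa using this
    | succ i ih =>
      have h2 := hrec' i
      have := aux_up (v ^ 2) (X i) (X (i + 1)) (X (i + 2)) (hXne i) hw2 ih h2
      rw [show (i : ℤ) + 1 + 1 = i + 2 by ring]
      exact this
    | pred i ih =>
      have h2 := hrec' (-(i : ℤ) - 1)
      rw [show -(i : ℤ) - 1 + 2 = -i + 1 by ring,
        show -(i : ℤ) - 1 + 1 = -i by ring] at h2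
      have := aux_down (v ^ 2) (X (-(i:ℤ) - 1)) (X (-(i:ℤ))) (X (-(i:ℤ) + 1))
        (hXne _) hw2 ih h2
      rw [show -(i : ℤ) - 1 + 1 = -i by ring]
      exact this
  have rcomm : ∀ m : ℤ, v ^ 2 * (X (m + 1) * X (m - 1)) = X m ^ 2 + v ^ 2 := by
    intro m
    have h1 := hcomm (m - 1)
    rw [show m - 1 + 1 = m by ring] at h1
    exact aux_rev (v ^ 2) (X (m - 1)) (X m) (X (m + 1)) (hXne _) hw2 h1 (hrec m)
  set D : ℤ → F := fun m => X m * X (m + 3) - v ^ 2 * (X (m + 1) * X (m + 2)) with hD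
  have Ld1 : ∀ m : ℤ, v ^ 2 * (X m * D (m - 2)) = v ^ 2 * X (m + 1) + X (m - 1) := by
    intro m
    have hbc := hcomm (m - 1)
    rw [show m - 1 + 1 = m by ring] at hbc
    have hca := rcomm (m - 1)
    rw [show m - 1 + 1 = m by ring, show m - 1 - 1 = m - 2 by ring] at hca
    have := aux_L (v ^ 2) (X (m - 2)) (X (m - 1)) (X m) (X (m + 1)) hw2 hbc (hrec m) hca
    simp only [hD]
    rw [show m - 2 + 3 = m + 1 by ring, show m - 2 + 1 = m - 1 by ring,
      show m - 2 + 2 = m by ring]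
    exact this
  have Ld2 : ∀ m : ℤ, v ^ 2 * (X m * D (m - 1)) = v ^ 2 * X (m + 1) + X (m - 1) := by
    intro m
    have hbc := hcomm (m - 1)
    rw [show m - 1 + 1 = m by ring] at hbc
    have hcf := hrec (m + 1)
    rw [show m + 1 - 1 = m by ring, show m + 1 + 1 = m + 2 by ring] at hcf
    have := aux_L2 (v ^ 2) (X (m - 1)) (X m) (X (m + 1)) (X (m + 2)) hw2 hbc (hrec m) hcf
    simp only [hD]
    rw [show m - 1 + 3 = m + 2 by ring, show m - 1 + 1 = m by ring,
      show m - 1 + 2 = m + 1 by ring]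
    exact this
  have hshift : ∀ m : ℤ, D m = D (m + 1) := by
    intro m
    have h1 := Ld1 (m + 2)
    rw [show m + 2 - 2 = m by ring, show m + 2 - 1 = m + 1 by ring] at h1
    have h2 := Ld2 (m + 2)
    rw [show m + 2 - 1 = m + 1 by ring] at h2
    have h3 : v ^ 2 * (X (m + 2) * D m) = v ^ 2 * (X (m + 2) * D (m + 1)) := by
      rw [h1, h2]
    exact mul_left_cancel₀ (hXne (m + 2)) (mul_left_cancel₀ (pow_ne_zero 2 hv) h3)
  have hDc : ∀ m : ℤ, D m = D 0 := by
    intro m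
    induction m using Int.induction_on with
    | zero => rfl
    | succ i ih => rw [← hshift i]; exact ih
    | pred i ih =>
      have := hshift (-(i : ℤ) - 1)
      rw [show -(i : ℤ) - 1 + 1 = -i by ring] at this
      rw [show -(i : ℤ) - 1 = -i - 1 by ring, this]
      exact ih
  have key : ∀ m : ℤ, v ^ 2 * (X m * D 0) = v ^ 2 * X (m + 1) + X (m - 1) := by
    intro m
    rw [← hDc (m - 2)]
    exact Ld1 m
  set T : ℤ → F := fun m =>
    v ^ m * (X 1 * X (m + 3)) - v ^ (m + 2) * (X 2 * X (m + 2)) with hT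
  have hstep : ∀ m : ℤ, T (m + 1) * (v * D 0) = T (m + 2) + T m := by
    intro m
    have k1 := key (m + 4)
    rw [show m + 4 + 1 = m + 5 by ring, show m + 4 - 1 = m + 3 by ring] at k1
    have k2 := key (m + 3)
    rw [show m + 3 + 1 = m + 4 by ring, show m + 3 - 1 = m + 2 by ring] at k2
    simp only [hT]
    rw [show m + 1 + 3 = m + 4 by ring, show m + 1 + 2 = m + 3 by ring,
      show m + 2 + 3 = m + 5 by ring, show m + 2 + 2 = m + 4 by ring]
    have e1 : v ^ (m + 1) * (X 1 * X (m + 4)) * (v * D 0)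
        = v ^ m * (X 1 * (v ^ 2 * (X (m + 4) * D 0))) := by
      simp only [mul_assoc, Wv, Wv2, Z1, Z2, Z1', Z2']
      rw [show m + 1 + 1 = m + 2 by ring]
    have e2 : v ^ (m + 3) * (X 2 * X (m + 3)) * (v * D 0)
        = v ^ (m + 2) * (X 2 * (v ^ 2 * (X (m + 3) * D 0))) := by
      simp only [mul_assoc, Wv, Wv2, Z1, Z2, Z1', Z2']
      rw [show m + 3 + 1 = m + 2 + 2 by ring]
    rw [sub_mul, e1, e2, k1, k2]
    simp only [mul_add, Wv2, Z2, Z2', mul_assoc]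
    rw [show m + 2 + 2 = m + 4 by ring]
    abel
  have hD0 : X 0 * X 3 - v ^ 2 * (X 1 * X 2) = D 0 := by
    simp only [hD]; norm_num
  have hcheb : ∀ n : ℕ, chebS (n + 2) = chebS (n + 1) * Polynomial.X - chebS n := by
    intro n
    match n with
    | 0 => show Polynomial.X ^ 2 - 1 = Polynomial.X * Polynomial.X - 1; rw [sq]
    | Nat.succ k => rfl
  have main : ∀ n : ℕ,
      Polynomial.aeval (v * D 0) (chebS n) = T (n : ℤ) ∧
      Polynomial.aeval (v * D 0) (chebS (n + 1)) = T ((n : ℤ) + 1) := by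
    intro n
    induction n with
    | zero =>
      constructor
      · show Polynomial.aeval (v * D 0) (chebS 0) = T ((0:ℕ) : ℤ)
        rw [show chebS 0 = 1 from rfl, map_one, Nat.cast_zero]
        simp only [hT]
        rw [show (0:ℤ) + 3 = 3 by ring, show (0:ℤ) + 2 = 2 by ring, zpow_zero,
          one_mul, hz2]
        have h3 := hrec 2
        norm_num at h3
        rw [h3, ← sq]
        abel
      · show Polynomial.aeval (v * D 0) (chebS (0 + 1)) = T (((0:ℕ) : ℤ) + 1)
        rw [show chebS (0 + 1) = Polynomial.X from rfl, Polynomial.aeval_X,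
          Nat.cast_zero, zero_add]
        simp only [hT]
        rw [show (1:ℤ) + 3 = 4 by ring, show (1:ℤ) + 2 = 3 by ring, zpow_one, hz3]
        rw [show D 0 = D 1 from (hDc 1).symm]
        simp only [hD]
        rw [show (1:ℤ) + 3 = 4 by ring, show (1:ℤ) + 1 = 2 by ring,
          show (1:ℤ) + 2 = 3 by ring, mul_sub]
        have hvv3 : v * (v ^ 2 * (X 2 * X 3)) = v ^ 3 * (X 2 * X 3) := by
          rw [← mul_assoc, ← pow_succ']
        rw [hvv3, ← mul_assoc]
    | succ k ih =>
      refine ⟨?_, ?_⟩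
      · rw [show ((k + 1 : ℕ) : ℤ) = (k : ℤ) + 1 by push_cast; ring]
        exact ih.2
      · rw [show k + 1 + 1 = k + 2 from rfl, hcheb k, map_sub, map_mul,
          Polynomial.aeval_X, ih.2, ih.1, hstep (k : ℤ),
          show ((k + 1 : ℕ) : ℤ) + 1 = (k : ℤ) + 2 by push_cast; ring]
        abel
  intro n
  rw [hD0]
  have h := (main n).1
  rw [hT] at h
  exact h
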